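/- With E_n as defined (|E_n| = 2^{3^{n-1}} · 3^{(3^n−1)/2}) and |Aut(T_n)| = 6^{(3^n−1)/2}, the limit as n → ∞ of log|E_n| / log|Aut(T_n)| equals 1 − (1/3)·(log 2 / log 6). -/

import Mathlib

open Equiv

/-- Leaves of the regular ternary rooted tree of height `n`. -/
def L : ℕ → Type
  | 0 => PUnit
  | n+1 => Fin 3 × L n

instance Ldec : ∀ n, DecidableEq (L n)
  | 0 => inferInstanceAs (DecidableEq PUnit)
  | n+1 => letI := Ldec n; inferInstanceAs (DecidableEq (Fin 3 × L n))

instance Lfin : ∀ n, Fintype (L n)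
  | 0 => inferInstanceAs (Fintype PUnit)
  | n+1 => letI := Lfin n; inferInstanceAs (Fintype (Fin 3 × L n))

/-- The wreath-product construction `G ≀ S_3` (as a type). -/
def W (G : Type) : Type := (Fin 3 → G) × Equiv.Perm (Fin 3)

instance Wgroup (G : Type) [Group G] : Group (W G) where
  mul x y := (fun i => x.1 (y.2 i) * y.1 i, x.2 * y.2)
  one := (fun _ => 1, 1)
  inv x := (fun i => (x.1 (x.2⁻¹ i))⁻¹, x.2⁻¹)
  mul_assoc x y z := Prod.ext (funext fun i => mul_assoc _ _ _) (mul_assoc _ _ _)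
  one_mul x := Prod.ext (funext fun i => one_mul _) (one_mul _)
  mul_one x := Prod.ext (funext fun i => mul_one _) (mul_one _)
  inv_mul_cancel x := Prod.ext (funext fun i => by
      show (x.1 (x.2⁻¹ (x.2 i)))⁻¹ * x.1 i = 1
      rw [show x.2⁻¹ (x.2 i) = i from x.2.symm_apply_apply i, inv_mul_cancel]) (inv_mul_cancel _)

/-- `A n` is the automorphism group of the ternary rooted tree of height `n`,
realized as the `n`-fold iterated wreath product of `S_3 = Aut(T_1)`. -/
def A : ℕ → Type
  | 0 => PUnit
  | n+1 => W (A n)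

instance Agroup : ∀ n, Group (A n)
  | 0 => inferInstanceAs (Group PUnit)
  | n+1 => @Wgroup (A n) (Agroup n)

/-- The faithful action of `A n` on the `3^n` leaves of the tree. -/
def toPerm : ∀ n, A n →* Equiv.Perm (L n)
  | 0 => 1
  | n+1 =>
    { toFun := fun x : W (A n) => Equiv.prodShear x.2 (fun i => toPerm n (x.1 i))
      map_one' := by
        apply Equiv.ext
        intro l
        show ((1 : Equiv.Perm (Fin 3)) l.1, toPerm n (1 : A n) l.2) = l
        rw [map_one]
        exact Prod.ext rfl rfl
      map_mul' := by
        intro x y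
        apply Equiv.ext
        intro l
        show ((x * y).2 l.1, toPerm n ((x * y).1 l.1) l.2)
          = (x.2 (y.2 l.1), toPerm n (x.1 (y.2 l.1)) ((toPerm n (y.1 l.1)) l.2))
        refine Prod.ext rfl ?_
        show toPerm n (x.1 (y.2 l.1) * y.1 l.1) l.2 = _
        rw [map_mul]
        rfl }

/-- Restriction `Aut(T_{n+1}) → Aut(T_n)` to the subtree spanned by the first `n` levels. -/
def res : ∀ n, A (n+1) →* A n
  | 0 => 1
  | n+1 =>
    { toFun := fun x : W (A (n+1)) => ((fun i => res n (x.1 i), x.2) : W (A n))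
      map_one' := Prod.ext (funext fun _ => map_one (res n)) rfl
      map_mul' := fun x y => Prod.ext (funext fun i => map_mul (res n) _ _) rfl }

/-- Restriction `Aut(T_{n+2}) → Aut(T_2)`. -/
def resTo2 : ∀ n, A (n+2) →* A 2
  | 0 => MonoidHom.id _
  | n+1 => (resTo2 n).comp (res (n+2))

/-- `sgn_2` : the sign of the permutation induced on the 9 leaves of `T_2`. -/
def sgn2 (n : ℕ) : A (n+2) →* ℤˣ :=
  Equiv.Perm.sign.comp ((toPerm 2).comp (resTo2 n))

/-- Given a subgroup `H ≤ Aut(T_n)`, the subgroup of `Aut(T_{n+1})` consisting of elements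
all of whose three level-1 components lie in `H` (the base of the wreath product `H ≀ S_3`). -/
def lift1 {n : ℕ} (Hn : Subgroup (A n)) : Subgroup (A (n+1)) where
  carrier := {x : W (A n) | ∀ i, x.1 i ∈ Hn}
  one_mem' := fun _ => Hn.one_mem
  mul_mem' := fun {x y} hx hy i => Hn.mul_mem (hx _) (hy _)
  inv_mem' := fun {x} hx i => Hn.inv_mem (hx _)

/-- The groups `E_n`: `E_1 = Aut(T_1)` and `E_n = (E_{n-1} ≀ Aut(T_1)) ∩ ker sgn_2`. -/
def E : ∀ n, Subgroup (A n)
  | 0 => ⊤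
  | 1 => ⊤
  | n+2 => lift1 (E (n+1)) ⊓ (sgn2 n).ker

/-- The projection onto the top (level-1) symmetric group component. -/
def sndHom (n : ℕ) : A (n+1) →* Equiv.Perm (Fin 3) where
  toFun := fun x : W (A n) => x.2
  map_one' := rfl
  map_mul' := fun _ _ => rfl

/-- The cyclic subgroup `C_3 ≤ S_3`. -/
def C3 : Subgroup (Equiv.Perm (Fin 3)) := Subgroup.zpowers (finRotate 3)

/-- The groups `H_n = [C_3]^n`, the iterated wreath product of cyclic groups of order 3. -/
def Hgp : ∀ n, Subgroup (A n)
  | 0 => ⊤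
  | n+1 => lift1 (Hgp n) ⊓ C3.comap (sndHom n)

/-- The elements `ν_n`: `ν_1 = (12)`, `ν_n = ((ν_{n-1},1,1),1)`. -/
def ν : ∀ n, A n
  | 0 => 1
  | 1 => ((fun _ => (1 : A 0), Equiv.swap 0 1) : W (A 0))
  | n+2 => ((fun i => if i = 0 then ν (n+1) else 1, 1) : W (A (n+1)))

/-- The elements `τ_n`: `τ_1 = (12)`, `τ_n = ((τ_{n-1},1,1),(12))`. -/
def τ : ∀ n, A n
  | 0 => 1
  | 1 => ((fun _ => (1 : A 0), Equiv.swap 0 1) : W (A 0))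
  | n+2 => ((fun i => if i = 0 then τ (n+1) else 1, Equiv.swap 0 1) : W (A (n+1)))

/-- Truncation of a leaf of `T_n` to the vertex at level `m` below it. -/
def take : ∀ (n m : ℕ), L n → L m
  | _, 0, _ => PUnit.unit
  | 0, m+1, _ => ((0, take 0 m PUnit.unit) : Fin 3 × L m)
  | n+1, m+1, l => ((l.1, take n m l.2) : Fin 3 × L m)


instance Afin : ∀ n, Fintype (A n)
  | 0 => inferInstanceAs (Fintype PUnit)
  | n+1 => letI := Afin n; inferInstanceAs (Fintype ((Fin 3 → A n) × Equiv.Perm (Fin 3)))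

def sg : ∀ n, A (n+1) := fun n => ((fun _ => 1, Equiv.swap 0 1) : W (A n))

lemma res_sg (n : ℕ) : res (n+1) (sg (n+1)) = sg n := by
  show ((fun i => res n ((1 : Fin 3 → A (n+1)) i), Equiv.swap 0 1) : W (A n)) = _
  refine Prod.ext (funext fun i => ?_) rfl
  exact map_one (res n)

lemma resTo2_sg : ∀ n, resTo2 n (sg (n+1)) = sg 1
  | 0 => rfl
  | n+1 => by
    show resTo2 n (res (n+2) (sg (n+2))) = sg 1
    rw [res_sg, resTo2_sg n]

lemma sgn2_sg (n : ℕ) : sgn2 n (sg (n+1)) = -1 := by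
  show Equiv.Perm.sign (toPerm 2 (resTo2 n (sg (n+1)))) = -1
  rw [resTo2_sg]
  decide

def lift1Equiv {n : ℕ} (Hn : Subgroup (A n)) :
    (lift1 Hn) ≃ ((Fin 3 → Hn) × Equiv.Perm (Fin 3)) where
  toFun x := (fun i => ⟨x.1.1 i, x.2 i⟩, x.1.2)
  invFun y := ⟨((fun i => (y.1 i : A n), y.2) : W (A n)), fun i => (y.1 i).2⟩
  left_inv x := rfl
  right_inv y := rfl

lemma card_lift1 {n : ℕ} (Hn : Subgroup (A n)) :
    Nat.card (lift1 Hn) = Nat.card Hn ^ 3 * 6 := by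
  rw [Nat.card_congr (lift1Equiv Hn), Nat.card_prod, Nat.card_pi]
  simp [Nat.card_eq_fintype_card, Fintype.card_perm, Nat.factorial]

lemma card_units_int : Nat.card ℤˣ = 2 := by
  rw [Nat.card_eq_fintype_card, Fintype.card_units_int]

lemma sg_mem_lift1 (n : ℕ) : sg (n+1) ∈ lift1 (E (n+1)) := fun _ => (E (n+1)).one_mem

lemma E_succ_succ (n : ℕ) : E (n+2) = lift1 (E (n+1)) ⊓ (sgn2 n).ker := rfl

lemma card_E_succ (n : ℕ) :
    Nat.card (E (n+2)) = 3 * Nat.card (E (n+1)) ^ 3 := by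
  set H := lift1 (E (n+1)) with hH
  set f : H →* ℤˣ := (sgn2 n).comp H.subtype with hf
  have hsurj : Function.Surjective f := by
    intro u
    rcases Int.units_eq_one_or u with rfl | rfl
    · exact ⟨1, map_one f⟩
    · exact ⟨⟨sg (n+1), sg_mem_lift1 n⟩, sgn2_sg n⟩
  have hcard : Nat.card H = 2 * Nat.card f.ker := by
    rw [Subgroup.card_eq_card_quotient_mul_card_subgroup f.ker,
      Nat.card_congr (QuotientGroup.quotientKerEquivOfSurjective f hsurj).toEquiv,
      Nat.card_eq_fintype_card, Fintype.card_units_int]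
  have hEk : Nat.card (E (n+2)) = Nat.card f.ker := by
    refine Nat.card_congr (Equiv.symm ?_)
    refine ⟨fun x => ⟨(x : H), x.1.2, ?_⟩, fun y => ⟨⟨(y : A (n+2)), y.2.1⟩, ?_⟩,
      fun x => rfl, fun y => rfl⟩
    · exact x.2
    · exact y.2.2
  have hlift : Nat.card H = Nat.card (E (n+1)) ^ 3 * 6 := card_lift1 _
  omega

def mm : ℕ → ℕ
  | 0 => 0
  | n+1 => 3 * mm n + 1

lemma card_A_zero : Nat.card (A 0) = 1 := Nat.card_eq_one_iff_unique.mpr ⟨⟨fun a b => rfl⟩, ⟨1⟩⟩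

lemma card_A_succ (n : ℕ) : Nat.card (A (n+1)) = Nat.card (A n) ^ 3 * 6 := by
  show Nat.card ((Fin 3 → A n) × Equiv.Perm (Fin 3)) = _
  rw [Nat.card_prod, Nat.card_pi]
  simp [Nat.card_eq_fintype_card, Fintype.card_perm, Nat.factorial]

lemma card_A (n : ℕ) : Nat.card (A n) = 6 ^ mm n := by
  induction n with
  | zero => simpa [mm] using card_A_zero
  | succ n ih =>
    rw [card_A_succ, ih, mm, pow_succ, ← pow_mul]
    ring

lemma card_E_one : Nat.card (E 1) = 6 := by
  have : Nat.card (E 1) = Nat.card (A 1) := by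
    show Nat.card (⊤ : Subgroup (A 1)) = _
    exact Subgroup.card_top
  rw [this, card_A]; rfl

lemma card_E (n : ℕ) : Nat.card (E (n+1)) = 2 ^ 3 ^ n * 3 ^ mm (n+1) := by
  induction n with
  | zero => simpa [mm] using card_E_one
  | succ n ih =>
    rw [card_E_succ, ih, show mm (n+2) = 3 * mm (n+1) + 1 from rfl]
    ring

lemma mm_real (n : ℕ) : (mm n : ℝ) = (3 ^ n - 1) / 2 := by
  induction n with
  | zero => simp [mm]
  | succ n ih => rw [show mm (n+1) = 3 * mm n + 1 from rfl]; push_cast [ih]; ring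

lemma log6_ne : Real.log 6 ≠ 0 := ne_of_gt (Real.log_pos (by norm_num))


/-- The Hausdorff dimension of `E_∞` in `Aut(T_∞)`:
`lim_{n→∞} log|E_n| / log|Aut(T_n)| = 1 - (1/3)·(log 2 / log 6)`. -/
theorem hausdorff_dim_E :
    Filter.Tendsto
      (fun n : ℕ => Real.log (Nat.card (E n)) / Real.log (Nat.card (A n)))
      Filter.atTop (nhds (1 - (1 / 3) * (Real.log 2 / Real.log 6))) := by
  rw [← Filter.tendsto_add_atTop_iff_nat 1]
  have hL6 : Real.log 6 = Real.log 2 + Real.log 3 := by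
    rw [show (6:ℝ) = 2 * 3 by norm_num, Real.log_mul (by norm_num) (by norm_num)]
  have key : ∀ k : ℕ,
      Real.log (Nat.card (E (k+1))) / Real.log (Nat.card (A (k+1)))
        = (2 / (3 - (1/3:ℝ)^k)) * (Real.log 2 / Real.log 6) + Real.log 3 / Real.log 6 := by
    intro k
    have hm : (mm (k+1) : ℝ) = (3 ^ (k+1) - 1) / 2 := mm_real (k+1)
    have h3k : (0:ℝ) < 3 ^ k := by positivity
    have h3k1 : (1:ℝ) < 3 ^ (k+1) := by
      calc (1:ℝ) < 3 := by norm_num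
      _ ≤ 3 ^ (k+1) := le_self_pow₀ (by norm_num) (Nat.succ_ne_zero k)
    have hmpos : (0:ℝ) < (mm (k+1) : ℝ) := by rw [hm]; linarith
    have hden : (3 - (1/3:ℝ)^k) ≠ 0 := by
      have : (1/3:ℝ)^k ≤ 1 := pow_le_one₀ (by norm_num) (by norm_num)
      linarith
    rw [card_E, card_A]
    push_cast
    rw [Real.log_mul (by positivity) (by positivity), Real.log_pow, Real.log_pow, Real.log_pow]
    have h13 : (1/3:ℝ)^k = (3^k)⁻¹ := by
      rw [div_pow, one_pow, one_div]
    have hA : (3:ℝ)^(k+1) - 1 ≠ 0 := by linarith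
    have h2 : 2/(3 - (3^k:ℝ)⁻¹) = 2*3^k/(3^(k+1)-1) := by
      rw [show (3:ℝ)^(k+1) = 3 * 3^k by ring]
      rw [div_eq_div_iff (by rw [← h13]; exact hden) (by nlinarith [h3k1, show (3:ℝ)^(k+1) = 3*3^k by ring])]
      field_simp
    rw [h13, hm, h2]
    field_simp
    push_cast
    ring
  simp_rw [key]
  have hlim : Filter.Tendsto (fun k : ℕ => (2 / (3 - (1/3:ℝ)^k))) Filter.atTop (nhds (2/3)) := by
    have h0 : Filter.Tendsto (fun k : ℕ => (1/3:ℝ)^k) Filter.atTop (nhds 0) :=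
      tendsto_pow_atTop_nhds_zero_of_lt_one (by norm_num) (by norm_num)
    have := Filter.Tendsto.div (tendsto_const_nhds (x := (2:ℝ)))
      ((tendsto_const_nhds (x := (3:ℝ))).sub h0) (by norm_num)
    simpa [Pi.div_def] using this
  have := (hlim.mul_const (Real.log 2 / Real.log 6)).add_const (Real.log 3 / Real.log 6)
  convert this using 2
  have hL3 : Real.log 3 = Real.log 6 - Real.log 2 := by linarith [hL6]
  rw [hL3]
  field_simp
  ring
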